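/- For every α > 0 there exists a constant κ = κ(α) > 0 such that for all vectors u, v ∈ ℝ³ one has 0 ≤ κ |u − v|² (|u| + |v|)^{2α} ≤ (|u|^{2α} u − |v|^{2α} v) · (u − v). -/

import Mathlib

lemma key12 (α : ℝ) (hα : 0 < α) (a b t : ℝ) (hb : 0 ≤ b) (hba : b ≤ a)
    (ht : t ≤ a * b) :
    (1 / (2 * (2:ℝ) ^ (2 * α))) * (a ^ 2 + b ^ 2 - 2 * t) * (a + b) ^ (2 * α) ≤
      a ^ (2 * α) * a ^ 2 + b ^ (2 * α) * b ^ 2 - (a ^ (2 * α) + b ^ (2 * α)) * t := by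
  have ha : 0 ≤ a := le_trans hb hba
  set c : ℝ := (2:ℝ) ^ (2 * α) with hcdef
  have hc : 0 < c := Real.rpow_pos_of_pos (by norm_num) _
  set κ : ℝ := 1 / (2 * c) with hκdef
  have hκc : κ * c = 1 / 2 := by rw [hκdef]; field_simp
  set A : ℝ := a ^ (2 * α) with hAdef
  set B : ℝ := b ^ (2 * α) with hBdef
  have hA : 0 ≤ A := Real.rpow_nonneg ha _
  have hB : 0 ≤ B := Real.rpow_nonneg hb _
  have hAB : B ≤ A := Real.rpow_le_rpow hb hba (by positivity)
  have h1 : (a + b) ^ (2 * α) ≤ c * A := by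
    calc (a + b) ^ (2 * α) ≤ (2 * a) ^ (2 * α) :=
          Real.rpow_le_rpow (by linarith) (by linarith) (by positivity)
      _ = c * A := Real.mul_rpow (by norm_num) ha
  have hP : 0 ≤ (a + b) ^ (2 * α) := Real.rpow_nonneg (by linarith) _
  have hκpos : 0 < κ := by positivity
  have hslope : 2 * κ * (a + b) ^ (2 * α) ≤ A + B := by
    have h2 : 2 * κ * (a + b) ^ (2 * α) ≤ 2 * κ * (c * A) := by
      apply mul_le_mul_of_nonneg_left h1 (by positivity)
    nlinarith [hκc, hA, hB]
  have hend : κ * (a - b) ^ 2 * (a + b) ^ (2 * α) ≤ (a - b) * (A * a - B * b) := by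
    have h2 : κ * (a - b) ^ 2 * (a + b) ^ (2 * α) ≤ κ * (a - b) ^ 2 * (c * A) := by
      apply mul_le_mul_of_nonneg_left h1 (by positivity)
    have h3 : κ * (a - b) ^ 2 * (c * A) = (1 / 2) * (a - b) ^ 2 * A := by
      rw [show κ * (a - b) ^ 2 * (c * A) = (κ * c) * (a - b) ^ 2 * A by ring, hκc]
    have h4 : A * b ≥ B * b := mul_le_mul_of_nonneg_right hAB hb
    nlinarith [sq_nonneg (a - b), mul_nonneg (mul_nonneg hA (sub_nonneg.2 hba)) (sub_nonneg.2 hba)]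
  nlinarith [mul_nonneg (sub_nonneg.2 ht) (sub_nonneg.2 hslope), hend]

/-- For every `α > 0` there is `κ = κ(α) > 0` such that for all `u, v ∈ ℝ³`,
`0 ≤ κ |u−v|² (|u|+|v|)^{2α} ≤ (|u|^{2α}u − |v|^{2α}v)·(u−v)`. -/
theorem stmt12 (α : ℝ) (hα : 0 < α) :
    ∃ κ : ℝ, 0 < κ ∧
      ∀ u v : EuclideanSpace ℝ (Fin 3),
        0 ≤ κ * ‖u - v‖ ^ 2 * (‖u‖ + ‖v‖) ^ (2 * α) ∧
        κ * ‖u - v‖ ^ 2 * (‖u‖ + ‖v‖) ^ (2 * α) ≤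
          (inner ℝ (‖u‖ ^ (2 * α) • u - ‖v‖ ^ (2 * α) • v) (u - v) : ℝ) := by
  have hc : (0:ℝ) < (2:ℝ) ^ (2 * α) := Real.rpow_pos_of_pos (by norm_num) _
  refine ⟨1 / (2 * (2:ℝ) ^ (2 * α)), by positivity, fun u v => ?_⟩
  constructor
  · have := Real.rpow_nonneg (add_nonneg (norm_nonneg u) (norm_nonneg v)) (2 * α)
    positivity
  · have hnorm : ‖u - v‖ ^ 2 = ‖u‖ ^ 2 + ‖v‖ ^ 2 - 2 * (inner ℝ u v : ℝ) := by
      rw [@norm_sub_sq_real]; ring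
    have hinner : (inner ℝ (‖u‖ ^ (2 * α) • u - ‖v‖ ^ (2 * α) • v) (u - v) : ℝ) =
        ‖u‖ ^ (2 * α) * ‖u‖ ^ 2 + ‖v‖ ^ (2 * α) * ‖v‖ ^ 2 -
          (‖u‖ ^ (2 * α) + ‖v‖ ^ (2 * α)) * (inner ℝ u v : ℝ) := by
      simp only [inner_sub_left, inner_sub_right, real_inner_smul_left,
        real_inner_self_eq_norm_sq, real_inner_comm v u]
      ring
    rw [hnorm, hinner]
    rcases le_total ‖v‖ ‖u‖ with h | h
    · exact key12 α hα ‖u‖ ‖v‖ _ (norm_nonneg v) h (real_inner_le_norm u v)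
    · have := key12 α hα ‖v‖ ‖u‖ (inner ℝ u v : ℝ) (norm_nonneg u) h
        (by rw [mul_comm]; exact real_inner_le_norm u v)
      rw [add_comm ‖u‖ ‖v‖]
      linarith
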